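/- For every integer n ≥ 1 and all real numbers δ, D with 0 < δ ≤ D, one has n·δ ≤ Φ_n(δ, D) ≤ n·D. -/

import Mathlib

open Real

/-- The inverse hyperbolic cosine. -/
noncomputable def arcosh (x : ℝ) : ℝ := Real.log (x + Real.sqrt (x ^ 2 - 1))

/-- The function `Φ_n`, defined for `0 < δ ≤ D`. -/
noncomputable def Phi (n : ℕ) (δ D : ℝ) : ℝ :=
  _root_.arcosh (Real.cosh (n * δ) +
    (Real.cosh (n * δ) - 1) * (Real.cosh D - Real.cosh δ) / (Real.cosh δ + 1))

lemma arcosh_cosh (x : ℝ) (hx : 0 ≤ x) : _root_.arcosh (Real.cosh x) = x := by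
  unfold _root_.arcosh
  have h1 : Real.cosh x ^ 2 - 1 = Real.sinh x ^ 2 := by
    have := Real.cosh_sq x; linarith
  rw [h1, Real.sqrt_sq (Real.sinh_nonneg_iff.2 hx), Real.cosh_add_sinh, Real.log_exp]

lemma arcosh_le_arcosh {x y : ℝ} (hx : 1 ≤ x) (hxy : x ≤ y) : _root_.arcosh x ≤ _root_.arcosh y := by
  unfold _root_.arcosh
  have h1 : (0:ℝ) < x + Real.sqrt (x ^ 2 - 1) := by
    have := Real.sqrt_nonneg (x ^ 2 - 1); linarith
  apply Real.log_le_log h1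
  have h2 : Real.sqrt (x ^ 2 - 1) ≤ Real.sqrt (y ^ 2 - 1) := by
    apply Real.sqrt_le_sqrt; nlinarith
  linarith

/-- Key inequality. -/
lemma key_ineq (n : ℕ) (hn : 1 ≤ n) (δ D : ℝ) (hδ : 0 < δ) (hδD : δ ≤ D) :
    (Real.cosh (n * δ) - 1) * (Real.cosh D + 1) ≤
      (Real.cosh (n * D) - 1) * (Real.cosh δ + 1) := by
  have hn1 : (1:ℝ) ≤ n := by exact_mod_cast hn
  -- product inequality via sinh addition formulas
  have hkey : Real.sinh (n * δ / 2) * Real.cosh (D / 2) ≤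
      Real.sinh (n * D / 2) * Real.cosh (δ / 2) := by
    have h1 : Real.sinh (n * δ / 2 + D / 2) ≤ Real.sinh (n * D / 2 + δ / 2) := by
      apply Real.sinh_le_sinh.2; nlinarith
    have h2 : Real.sinh (n * δ / 2 - D / 2) ≤ Real.sinh (n * D / 2 - δ / 2) := by
      apply Real.sinh_le_sinh.2; nlinarith
    rw [Real.sinh_add, Real.sinh_add] at h1
    rw [Real.sinh_sub, Real.sinh_sub] at h2
    linarith
  have hs1 : 0 ≤ Real.sinh (n * δ / 2) := Real.sinh_nonneg_iff.2 (by positivity)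
  have hc1 : (0:ℝ) < Real.cosh (D / 2) := Real.cosh_pos _
  have hc2 : (0:ℝ) < Real.cosh (δ / 2) := Real.cosh_pos _
  have e1 : Real.cosh (n * δ) - 1 = 2 * Real.sinh (n * δ / 2) ^ 2 := by
    have h := Real.cosh_two_mul (n * δ / 2)
    have h2 := Real.cosh_sq (n * δ / 2)
    have : 2 * (n * δ / 2) = n * δ := by ring
    rw [this] at h; linarith
  have e2 : Real.cosh (n * D) - 1 = 2 * Real.sinh (n * D / 2) ^ 2 := by
    have h := Real.cosh_two_mul (n * D / 2)
    have h2 := Real.cosh_sq (n * D / 2)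
    have : 2 * (n * D / 2) = n * D := by ring
    rw [this] at h; linarith
  have e3 : Real.cosh D + 1 = 2 * Real.cosh (D / 2) ^ 2 := by
    have h := Real.cosh_two_mul (D / 2)
    have h2 := Real.cosh_sq (D / 2)
    have : 2 * (D / 2) = D := by ring
    rw [this] at h; linarith
  have e4 : Real.cosh δ + 1 = 2 * Real.cosh (δ / 2) ^ 2 := by
    have h := Real.cosh_two_mul (δ / 2)
    have h2 := Real.cosh_sq (δ / 2)
    have : 2 * (δ / 2) = δ := by ring
    rw [this] at h; linarith
  rw [e1, e2, e3, e4]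
  nlinarith [mul_nonneg hs1 hc1.le, mul_nonneg (Real.sinh_nonneg_iff.2 (by nlinarith : (0:ℝ) ≤ (n:ℝ) * D / 2)) hc2.le]

/-- For every integer `n ≥ 1` and all real `0 < δ ≤ D`, one has `nδ ≤ Φ_n(δ, D) ≤ nD`. -/
theorem stmt7 (n : ℕ) (hn : 1 ≤ n) (δ D : ℝ) (hδ : 0 < δ) (hδD : δ ≤ D) :
    (n : ℝ) * δ ≤ Phi n δ D ∧ Phi n δ D ≤ (n : ℝ) * D := by
  have hn1 : (1:ℝ) ≤ n := by exact_mod_cast hn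
  have hnδ : 0 ≤ (n:ℝ) * δ := by positivity
  have hnD : 0 ≤ (n:ℝ) * D := by nlinarith
  have hcδ : (0:ℝ) < Real.cosh δ + 1 := by have := Real.cosh_pos δ; linarith
  have hcmono : Real.cosh δ ≤ Real.cosh D := by
    rw [Real.cosh_le_cosh, abs_of_pos hδ, abs_of_pos (lt_of_lt_of_le hδ hδD)]
    exact hδD
  have h1 : (1:ℝ) ≤ Real.cosh ((n:ℝ) * δ) := Real.one_le_cosh _
  set A := Real.cosh ((n:ℝ) * δ) +
    (Real.cosh ((n:ℝ) * δ) - 1) * (Real.cosh D - Real.cosh δ) / (Real.cosh δ + 1) with hA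
  have hlow : Real.cosh ((n:ℝ) * δ) ≤ A := by
    have : 0 ≤ (Real.cosh ((n:ℝ) * δ) - 1) * (Real.cosh D - Real.cosh δ) / (Real.cosh δ + 1) := by
      apply div_nonneg _ hcδ.le
      apply mul_nonneg <;> linarith
    rw [hA]; linarith [this]
  have hhigh : A ≤ Real.cosh ((n:ℝ) * D) := by
    have hk := key_ineq n hn δ D hδ hδD
    rw [hA, ← sub_nonneg]
    have heq : Real.cosh ((n:ℝ) * D) - (Real.cosh ((n:ℝ) * δ) +
        (Real.cosh ((n:ℝ) * δ) - 1) * (Real.cosh D - Real.cosh δ) / (Real.cosh δ + 1)) =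
        ((Real.cosh ((n:ℝ) * D) - 1) * (Real.cosh δ + 1) -
          (Real.cosh ((n:ℝ) * δ) - 1) * (Real.cosh D + 1)) / (Real.cosh δ + 1) := by
      field_simp
      ring
    rw [heq]
    exact div_nonneg (by linarith) hcδ.le
  constructor
  · calc (n:ℝ) * δ = _root_.arcosh (Real.cosh ((n:ℝ) * δ)) := (_root_.arcosh_cosh _ hnδ).symm
      _ ≤ Phi n δ D := _root_.arcosh_le_arcosh h1 hlow
  · calc Phi n δ D ≤ _root_.arcosh (Real.cosh ((n:ℝ) * D)) :=
        _root_.arcosh_le_arcosh (le_trans h1 hlow) hhigh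
      _ = (n:ℝ) * D := _root_.arcosh_cosh _ hnD
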